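/- Fix n ∈ ℕ, n ≥ 1, and let D = [0,1]ⁿ. Let g : D → ℝ be Lipschitz with constant l_g, let x₁,…,x_N be i.i.d. uniform samples from D with outputs yᵢ satisfying ‖g(xᵢ) − yᵢ‖ ≤ ε̄, fix ρ > 0, ε > ε̄, δ ∈ (0,1), and let l* be the minimal Lipschitz constant over all Lipschitz f : D → ℝ with max_i ‖yᵢ − f(xᵢ)‖ ≤ ε. Then there exist constants k₁ > 0, k₂ > 0 and N₀ ∈ ℕ depending only on n such that for all N ≥ N₀, with probability at least 1 − δ, every Lipschitz f : D → ℝ with max_i ‖yᵢ − f(xᵢ)‖ ≤ ε and Lip(f) ≤ l* + ρ satisfies sup_{x∈D} ‖g(x) − f(x)‖ ≤ (2·l_g + ρ)·k₁·(log(k₂·N/δ)/N)^{1/n} + 2ε. -/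

import Mathlib

open scoped NNReal
open MeasureTheory Set
open scoped ENNReal
open scoped NNReal
open MeasureTheory

noncomputable def lipSemi {n : ℕ} (D : Set (EuclideanSpace ℝ (Fin n)))
    (f : EuclideanSpace ℝ (Fin n) → ℝ) : ℝ :=
  sInf {γ : ℝ | 0 ≤ γ ∧ ∀ x ∈ D, ∀ y ∈ D, ‖f x - f y‖ ≤ γ * ‖x - y‖}

lemma lipsemi_set_mem {n : ℕ} {D : Set (EuclideanSpace ℝ (Fin n))}
    {f : EuclideanSpace ℝ (Fin n) → ℝ} {C : ℝ≥0} (h : LipschitzOnWith C f D) :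
    (C : ℝ) ∈ {γ : ℝ | 0 ≤ γ ∧ ∀ x ∈ D, ∀ y ∈ D, ‖f x - f y‖ ≤ γ * ‖x - y‖} := by
  refine ⟨C.coe_nonneg, fun x hx y hy => ?_⟩
  have := h.dist_le_mul x hx y hy
  rwa [Real.dist_eq, dist_eq_norm] at this
  
lemma lipsemi_bdd {n : ℕ} {D : Set (EuclideanSpace ℝ (Fin n))}
    {f : EuclideanSpace ℝ (Fin n) → ℝ} :
    BddBelow {γ : ℝ | 0 ≤ γ ∧ ∀ x ∈ D, ∀ y ∈ D, ‖f x - f y‖ ≤ γ * ‖x - y‖} :=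
  ⟨0, fun _ h => h.1⟩

lemma lipSemi_nonneg {n : ℕ} {D : Set (EuclideanSpace ℝ (Fin n))}
    {f : EuclideanSpace ℝ (Fin n) → ℝ} {C : ℝ≥0} (h : LipschitzOnWith C f D) :
    0 ≤ lipSemi D f :=
  le_csInf ⟨_, lipsemi_set_mem h⟩ (fun _ hb => hb.1)

lemma lipSemi_le {n : ℕ} {D : Set (EuclideanSpace ℝ (Fin n))}
    {f : EuclideanSpace ℝ (Fin n) → ℝ} {c : ℝ} (hc : 0 ≤ c)
    (h : ∀ x ∈ D, ∀ y ∈ D, ‖f x - f y‖ ≤ c * ‖x - y‖) :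
    lipSemi D f ≤ c :=
  csInf_le lipsemi_bdd ⟨hc, h⟩

lemma lipSemi_bound {n : ℕ} {D : Set (EuclideanSpace ℝ (Fin n))}
    {f : EuclideanSpace ℝ (Fin n) → ℝ} {C : ℝ≥0} (h : LipschitzOnWith C f D)
    {x y : EuclideanSpace ℝ (Fin n)} (hx : x ∈ D) (hy : y ∈ D) :
    ‖f x - f y‖ ≤ lipSemi D f * ‖x - y‖ := by
  rcases eq_or_ne x y with rfl | hne
  · simp
  · have hpos : 0 < ‖x - y‖ := by
      rw [norm_pos_iff, sub_ne_zero]; exact hne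
    rw [← div_le_iff₀ hpos]
    exact le_csInf ⟨_, lipsemi_set_mem h⟩ fun γ hγ =>
      (div_le_iff₀ hpos).2 (hγ.2 x hx y hy)
open MeasureTheory Set

def cell (n m : ℕ) (j : Fin n → Fin m) : Set (EuclideanSpace ℝ (Fin n)) :=
  {x | ∀ i, x i ∈ Set.Icc ((j i : ℝ) / m) (((j i : ℝ) + 1) / m)}

lemma mem_cell_of_mem_D {n m : ℕ} (hm : 0 < m) (x : EuclideanSpace ℝ (Fin n))
    (hx : ∀ i, x i ∈ Set.Icc (0:ℝ) 1) : ∃ j : Fin n → Fin m, x ∈ cell n m j := by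
  have hmR : (0:ℝ) < m := Nat.cast_pos.2 hm
  refine ⟨fun i => ⟨min ⌊x i * m⌋₊ (m - 1), by omega⟩, fun i => ?_⟩
  have h0 : 0 ≤ x i := (hx i).1
  have h1 : x i ≤ 1 := (hx i).2
  have hxm0 : 0 ≤ x i * m := by positivity
  simp only [cell, Set.mem_Icc]
  constructor
  · rw [div_le_iff₀ hmR]
    calc ((min ⌊x i * m⌋₊ (m-1) : ℕ) : ℝ) ≤ (⌊x i * m⌋₊ : ℝ) := by
          exact_mod_cast min_le_left _ _
      _ ≤ x i * m := Nat.floor_le hxm0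
  · rw [le_div_iff₀ hmR]
    rcases le_or_gt ⌊x i * m⌋₊ (m-1) with hle | hlt
    · rw [min_eq_left hle]
      exact (Nat.lt_floor_add_one (x i * m)).le
    · rw [min_eq_right hlt.le]
      have : ((m - 1 : ℕ) : ℝ) + 1 = m := by
        have : (1:ℕ) ≤ m := hm
        push_cast [Nat.cast_sub this]
        ring
      rw [this]
      nlinarith

lemma cell_diam {n m : ℕ} (hm : 0 < m) {j : Fin n → Fin m}
    {x y : EuclideanSpace ℝ (Fin n)} (hx : x ∈ cell n m j) (hy : y ∈ cell n m j) :
    ‖x - y‖ ≤ Real.sqrt n / m := by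
  have hmR : (0:ℝ) < m := Nat.cast_pos.2 hm
  rw [EuclideanSpace.norm_eq]
  rw [div_eq_mul_inv, ← Real.sqrt_sq (le_of_lt (inv_pos.2 hmR)), ← Real.sqrt_mul (Nat.cast_nonneg n)]
  apply Real.sqrt_le_sqrt
  calc ∑ i, ‖(x - y) i‖ ^ 2 ≤ ∑ _i : Fin n, ((m:ℝ)⁻¹)^2 := by
        apply Finset.sum_le_sum
        intro i _
        have hxi := hx i; have hyi := hy i
        simp only [Set.mem_Icc, add_div] at hxi hyi
        have : (x - y) i = x i - y i := rfl
        rw [this, Real.norm_eq_abs, sq_abs]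
        have h1 : x i - y i ≤ 1/m := by linarith [hxi.2, hyi.1]
        have h2 : -(1/m) ≤ x i - y i := by linarith [hyi.2, hxi.1]
        have habs : |x i - y i| ≤ 1/m := abs_le.2 ⟨h2, h1⟩
        calc (x i - y i)^2 = |x i - y i|^2 := (sq_abs _).symm
          _ ≤ (1/m)^2 := by
              apply pow_le_pow_left₀ (abs_nonneg _) habs
          _ = ((m:ℝ)⁻¹)^2 := by rw [one_div]
    _ = n * ((m:ℝ)⁻¹)^2 := by simp [Finset.sum_const]

lemma cell_subset_D {n m : ℕ} (hm : 0 < m) (j : Fin n → Fin m) :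
    cell n m j ⊆ {x : EuclideanSpace ℝ (Fin n) | ∀ i, x i ∈ Set.Icc (0:ℝ) 1} := by
  intro x hx i
  have hmR : (0:ℝ) < m := Nat.cast_pos.2 hm
  have h := hx i
  simp only [Set.mem_Icc] at h ⊢
  have hj : ((j i : ℕ) : ℝ) + 1 ≤ m := by exact_mod_cast (j i).2
  constructor
  · exact le_trans (by positivity) h.1
  · exact le_trans h.2 (by rw [div_le_one hmR]; exact hj)

lemma cell_measurable {n m : ℕ} (j : Fin n → Fin m) : MeasurableSet (cell n m j) := by
  have : cell n m j = ⋂ i, (fun x : EuclideanSpace ℝ (Fin n) => x i) ⁻¹'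
      (Set.Icc ((j i : ℝ)/m) (((j i : ℝ)+1)/m)) := by
    ext x; simp [cell, Set.mem_iInter]
  rw [this]
  exact MeasurableSet.iInter fun i =>
    ((EuclideanSpace.proj (𝕜 := ℝ) i).continuous.measurable measurableSet_Icc)

set_option maxHeartbeats 1000000 in
lemma key_real (n N : ℕ) (hn : 1 ≤ n) (hN : 1 ≤ N) {δ L s : ℝ}
    (hδ0 : 0 < δ) (hδ1 : δ < 1)
    (hL : L = Real.log (3 * N / δ))
    (hs : s = 4 * Real.sqrt n * (L / N) ^ ((1:ℝ) / n)) :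
    0 < s ∧ 1 ≤ L ∧
      ((⌈1/s⌉₊ ^ n : ℕ) : ℝ) * (1 - (1 / (⌈1/s⌉₊ : ℝ)) ^ n) ^ N ≤ δ := by
  have hNR : (1:ℝ) ≤ N := by exact_mod_cast hN
  have hNpos : (0:ℝ) < N := by linarith
  have hnR : (1:ℝ) ≤ n := by exact_mod_cast hn
  have harg : (3:ℝ) ≤ 3 * N / δ := by
    rw [le_div_iff₀ hδ0]; nlinarith
  have hargpos : (0:ℝ) < 3 * N / δ := by linarith
  have hL1 : 1 ≤ L := by
    rw [hL, Real.le_log_iff_exp_le hargpos]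
    have := Real.exp_one_lt_d9
    linarith
  have hLN : (0:ℝ) < L / N := by positivity
  have hsqrt : (1:ℝ) ≤ Real.sqrt n := by
    rw [show (1:ℝ) = Real.sqrt 1 by simp]
    exact Real.sqrt_le_sqrt hnR
  have ht : (0:ℝ) < (L / N) ^ ((1:ℝ) / n) := Real.rpow_pos_of_pos hLN _
  have hspos : 0 < s := by rw [hs]; positivity
  refine ⟨hspos, hL1, ?_⟩
  set m := ⌈1/s⌉₊ with hm
  have hm1 : 1 ≤ m := Nat.one_le_iff_ne_zero.2 (by
    have : 0 < m := Nat.ceil_pos.2 (by positivity)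
    omega)
  -- s^n = 4^n * (√n)^n * (L/N)
  have hsn : s ^ n = 4 ^ n * Real.sqrt n ^ n * (L / N) := by
    rw [hs]
    rw [mul_pow, mul_pow]
    congr 1
    rw [← Real.rpow_natCast ((L/N) ^ ((1:ℝ)/n)) n, ← Real.rpow_mul hLN.le]
    rw [one_div_mul_cancel (by positivity : (n:ℝ) ≠ 0), Real.rpow_one]
  rcases eq_or_lt_of_le hm1 with h1 | h2
  · -- m = 1 : left factor 1, second factor 0
    rw [← h1]
    push_cast
    rw [one_pow, div_one, one_pow, sub_self, zero_pow (by omega : N ≠ 0), mul_zero]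
    exact hδ0.le
  · -- m ≥ 2
    have hmR : (0:ℝ) < m := by exact_mod_cast Nat.lt_of_lt_of_le Nat.zero_lt_one hm1
    have hinv1 : 1 < 1 / s := by
      have := (Nat.lt_ceil (n := 1)).1 (by exact_mod_cast h2)
      exact_mod_cast this
    have hmle : (m : ℝ) ≤ 2 / s := by
      have h := Nat.ceil_lt_add_one (le_of_lt (by positivity : (0:ℝ) < 1/s))
      have : (m:ℝ) < 1/s + 1 := by exact_mod_cast h
      have : (m:ℝ) < 1/s + 1/s := by linarith
      rw [← add_div] at this
      linarith [this]
    clear_value m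
    have hsle1 : s ≤ 1 := by
      rcases le_or_gt s 1 with h | h
      · exact h
      · exfalso; have : 1/s < 1 := by rw [div_lt_one hspos]; exact h
        linarith
    -- mⁿ ≤ 2ⁿ/sⁿ ≤ N
    have hsnpos : 0 < s ^ n := by positivity
    have hmn_le : (m:ℝ)^n ≤ 2^n / s^n := by
      calc (m:ℝ)^n ≤ (2/s)^n := pow_le_pow_left₀ hmR.le hmle n
        _ = 2^n / s^n := div_pow 2 s n
    have h2n4n : (2:ℝ)^n * 2 ≤ 4^n := by
      calc (2:ℝ)^n * 2 ≤ 2^n * 2^n := by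
            have : (2:ℝ) ≤ 2^n := by
              calc (2:ℝ) = 2^1 := (pow_one 2).symm
                _ ≤ 2^n := pow_le_pow_right₀ one_le_two hn
            nlinarith [pow_pos (by norm_num : (0:ℝ)<2) n]
        _ = 4^n := by rw [← mul_pow]; norm_num
    have hsn_ge : 2 * 2^n * (L/N) ≤ s^n := by
      rw [hsn]
      have h1 : (1:ℝ) ≤ Real.sqrt n ^ n := one_le_pow₀ hsqrt
      have h3 : 2 * 2^n ≤ (4:ℝ)^n * Real.sqrt n ^ n := by
        calc 2 * (2:ℝ)^n = 2^n * 2 * 1 := by ring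
          _ ≤ 4^n * Real.sqrt n ^ n := by
              apply mul_le_mul h2n4n h1 zero_le_one (by positivity)
      exact mul_le_mul_of_nonneg_right h3 hLN.le
    have hmnN : (m:ℝ)^n ≤ N := by
      calc (m:ℝ)^n ≤ 2^n / s^n := hmn_le
        _ ≤ 2^n / (2 * 2^n * (L/N)) := by
            apply div_le_div_of_nonneg_left (by positivity) (by positivity) hsn_ge
        _ = N / (2 * L) := by field_simp
        _ ≤ N := by
          rw [div_le_iff₀ (by linarith)]
          nlinarith
    -- N/mⁿ ≥ 2L
    have hNp : 2 * L ≤ N / (m:ℝ)^n := by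
      rw [le_div_iff₀ (by positivity)]
      calc 2 * L * (m:ℝ)^n ≤ 2 * L * (2^n / s^n) := by
            apply mul_le_mul_of_nonneg_left hmn_le (by positivity)
        _ ≤ N := by
            rw [show 2*L*((2:ℝ)^n/s^n) = (2*L*2^n)/s^n by ring, div_le_iff₀ hsnpos]
            have he : (N:ℝ)*(2*2^n*(L/N)) = 2*L*2^n := by field_simp
            nlinarith [mul_le_mul_of_nonneg_left hsn_ge hNpos.le]
    -- (1 - 1/mⁿ)^N ≤ exp(-N/mⁿ) ≤ exp(-2L) = (δ/(3N))²
    have hp01 : 0 ≤ 1 - (1/(m:ℝ))^n := by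
      have : (1/(m:ℝ))^n ≤ 1 := by
        apply pow_le_one₀ (by positivity)
        rw [div_le_one hmR]; exact_mod_cast hm1
      linarith
    have hstep : (1 - (1/(m:ℝ))^n) ^ N ≤ Real.exp (-(N / (m:ℝ)^n)) := by
      calc (1 - (1/(m:ℝ))^n) ^ N ≤ Real.exp (-(1/(m:ℝ))^n) ^ N := by
            apply pow_le_pow_left₀ hp01
            linarith [Real.add_one_le_exp (-(1/(m:ℝ))^n)]
        _ = Real.exp ((N:ℕ) * (-(1/(m:ℝ))^n)) := (Real.exp_nat_mul _ N).symm
        _ = Real.exp (-(N / (m:ℝ)^n)) := by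
            congr 1
            rw [div_pow, one_pow]
            ring
    have hexp2 : Real.exp (-(N / (m:ℝ)^n)) ≤ Real.exp (-(2*L)) := by
      apply Real.exp_le_exp.2; linarith
    have hexpval : Real.exp (-(2*L)) = (δ / (3*N))^2 := by
      rw [hL, show -(2 * Real.log (3*(N:ℝ)/δ)) = -Real.log (3*(N:ℝ)/δ) + -Real.log (3*(N:ℝ)/δ) by ring,
        Real.exp_add, Real.exp_neg, Real.exp_log hargpos, inv_div, sq]
    calc ((m ^ n : ℕ) : ℝ) * (1 - (1/(m:ℝ))^n) ^ N
        ≤ (N:ℝ) * (δ/(3*N))^2 := by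
          apply mul_le_mul _ (hstep.trans (hexp2.trans_eq hexpval)) (by positivity) hNpos.le
          push_cast; exact hmnN
      _ = δ^2 / (9*N) := by
          rw [div_pow, mul_pow]
          rw [show ((3:ℝ)^2 * N^2) = (9*N)*N by ring]
          field_simp
      _ ≤ δ := by
          rw [div_le_iff₀ (by positivity)]
          nlinarith


lemma vol_pi_Icc {n : ℕ} (a b : Fin n → ℝ) :
    (volume : Measure (EuclideanSpace ℝ (Fin n))) {x | ∀ i, x i ∈ Set.Icc (a i) (b i)}
      = ∏ i, ENNReal.ofReal (b i - a i) := by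
  have h := EuclideanSpace.volume_preserving_symm_measurableEquiv_toLp (Fin n)
  have h2 := h.measure_preimage (s := univ.pi fun i => Set.Icc (a i) (b i))
    (MeasurableSet.univ_pi fun i => measurableSet_Icc).nullMeasurableSet
  rw [volume_pi_pi] at h2
  simp only [Real.volume_Icc] at h2
  rw [← h2]
  congr 1
  ext x
  simp [MeasurableEquiv.toLp, Set.mem_pi, Pi.le_def, forall_and]
  exact Iff.rfl

lemma measurable_pi_Icc {n : ℕ} (a b : Fin n → ℝ) :
    MeasurableSet {x : EuclideanSpace ℝ (Fin n) | ∀ i, x i ∈ Set.Icc (a i) (b i)} := by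
  have : {x : EuclideanSpace ℝ (Fin n) | ∀ i, x i ∈ Set.Icc (a i) (b i)}
      = ⋂ i, (fun x : EuclideanSpace ℝ (Fin n) => x i) ⁻¹' (Set.Icc (a i) (b i)) := by
    ext x; simp [Set.mem_iInter]
  rw [this]
  exact MeasurableSet.iInter fun i =>
    ((EuclideanSpace.proj (𝕜 := ℝ) i).continuous.measurable measurableSet_Icc)

theorem stmt14 (n : ℕ) (hn : 1 ≤ n)
    (D : Set (EuclideanSpace ℝ (Fin n)))
    (hD : D = {x : EuclideanSpace ℝ (Fin n) | ∀ i, x i ∈ Set.Icc (0 : ℝ) 1}) :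
    ∃ k₁ > (0 : ℝ), ∃ k₂ > (0 : ℝ), ∃ N₀ : ℕ,
      ∀ (g : EuclideanSpace ℝ (Fin n) → ℝ) (lg εbar ε ρ δ : ℝ),
        0 ≤ lg →
        (∀ x ∈ D, ∀ y ∈ D, ‖g x - g y‖ ≤ lg * ‖x - y‖) →
        0 ≤ εbar → εbar < ε → 0 < ρ → 0 < δ → δ < 1 →
        ∀ N : ℕ, N₀ ≤ N →
        ∀ y : (Fin N → EuclideanSpace ℝ (Fin n)) → Fin N → ℝ,
          (∀ ω i, ‖g (ω i) - y ω i‖ ≤ εbar) →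
          ENNReal.ofReal (1 - δ) ≤
            (Measure.pi fun _ : Fin N => volume.restrict D)
              {ω | ∀ f : EuclideanSpace ℝ (Fin n) → ℝ,
                (∃ C : ℝ≥0, LipschitzOnWith C f D) →
                (∀ i, ‖y ω i - f (ω i)‖ ≤ ε) →
                lipSemi D f ≤ sInf {l : ℝ | ∃ f' : EuclideanSpace ℝ (Fin n) → ℝ,
                    (∃ C : ℝ≥0, LipschitzOnWith C f' D) ∧
                    (∀ i, ‖y ω i - f' (ω i)‖ ≤ ε) ∧
                    l = lipSemi D f'} + ρ →
                ∀ x ∈ D, ‖g x - f x‖ ≤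
                  (2 * lg + ρ) * (k₁ * (Real.log (k₂ * N / δ) / N) ^ ((1 : ℝ) / n)) + 2 * ε} := by
  have hnR : (1:ℝ) ≤ n := by exact_mod_cast hn
  refine ⟨4 * n, by positivity, 3, by norm_num, 1, ?_⟩
  intro g lg εbar ε ρ δ hlg hg hεbar hεε hρ hδ0 hδ1 N hN y hy
  have hNR : (1:ℝ) ≤ N := by exact_mod_cast hN
  -- notation
  set L := Real.log (3 * (N:ℝ) / δ) with hLdef
  set t := (L / (N:ℝ)) ^ ((1:ℝ)/n) with htdef
  set s := 4 * Real.sqrt n * t with hsdef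
  obtain ⟨hspos, hL1, hkey⟩ := key_real n N hn hN hδ0 hδ1 hLdef hsdef
  set m := ⌈1/s⌉₊ with hmdef
  have hm : 0 < m := Nat.ceil_pos.2 (by positivity)
  have hmR : (0:ℝ) < m := by exact_mod_cast hm
  set μb := volume.restrict D with hμb
  set μN := Measure.pi (fun _ : Fin N => μb) with hμN
  have hDmeas : MeasurableSet D := by rw [hD]; exact measurable_pi_Icc _ _
  have hvolD : volume D = 1 := by
    rw [hD, vol_pi_Icc (fun _ => (0:ℝ)) (fun _ => (1:ℝ))]
    simp
  haveI : IsProbabilityMeasure μb := ⟨by rw [hμb, Measure.restrict_apply_univ]; exact hvolD⟩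
  -- the good event
  set Good : Set (Fin N → EuclideanSpace ℝ (Fin n)) :=
    {ω | (∀ i, ω i ∈ D) ∧ ∀ j : Fin n → Fin m, ∃ i, ω i ∈ cell n m j} with hGood
  -- Step A : Good is contained in the event
  have hsub : Good ⊆ {ω | ∀ f : EuclideanSpace ℝ (Fin n) → ℝ,
                (∃ C : ℝ≥0, LipschitzOnWith C f D) →
                (∀ i, ‖y ω i - f (ω i)‖ ≤ ε) →
                lipSemi D f ≤ sInf {l : ℝ | ∃ f' : EuclideanSpace ℝ (Fin n) → ℝ,
                    (∃ C : ℝ≥0, LipschitzOnWith C f' D) ∧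
                    (∀ i, ‖y ω i - f' (ω i)‖ ≤ ε) ∧
                    l = lipSemi D f'} + ρ →
                ∀ x ∈ D, ‖g x - f x‖ ≤
                  (2 * lg + ρ) * ((4 * n) * (Real.log (3 * N / δ) / N) ^ ((1 : ℝ) / n)) + 2 * ε} := by
    rintro ω ⟨hωD, hωcell⟩ f ⟨C, hC⟩ hfy hflip x hx
    obtain ⟨j, hxj⟩ := mem_cell_of_mem_D hm x (by rw [hD] at hx; exact hx)
    obtain ⟨i, hij⟩ := hωcell j
    have hωiD : ω i ∈ D := hωD i
    have hdist : ‖x - ω i‖ ≤ 4 * n * t := by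
      calc ‖x - ω i‖ ≤ Real.sqrt n / m := cell_diam hm hxj hij
        _ ≤ Real.sqrt n * s := by
            rw [div_eq_mul_inv]
            apply mul_le_mul_of_nonneg_left _ (Real.sqrt_nonneg _)
            rw [inv_le_comm₀ hmR hspos, ← one_div]
            exact Nat.le_ceil _
        _ = 4 * n * t := by
            rw [hsdef]
            rw [show Real.sqrt ↑n * (4 * Real.sqrt ↑n * t)
              = 4 * (Real.sqrt ↑n * Real.sqrt ↑n) * t by ring,
              Real.mul_self_sqrt (by positivity)]
    -- the minimal Lipschitz constant
    set lstar := sInf {l : ℝ | ∃ f' : EuclideanSpace ℝ (Fin n) → ℝ,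
        (∃ C : ℝ≥0, LipschitzOnWith C f' D) ∧
        (∀ i, ‖y ω i - f' (ω i)‖ ≤ ε) ∧ l = lipSemi D f'} with hlstar
    have hglip : LipschitzOnWith lg.toNNReal g D :=
      LipschitzOnWith.of_dist_le' (fun a ha b hb => by
        rw [Real.dist_eq, dist_eq_norm, ← Real.norm_eq_abs]
        exact hg a ha b hb)
    have hgmem : lipSemi D g ∈ {l : ℝ | ∃ f' : EuclideanSpace ℝ (Fin n) → ℝ,
        (∃ C : ℝ≥0, LipschitzOnWith C f' D) ∧
        (∀ i, ‖y ω i - f' (ω i)‖ ≤ ε) ∧ l = lipSemi D f'} :=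
      ⟨g, ⟨lg.toNNReal, hglip⟩,
        fun i' => by rw [norm_sub_rev]; exact (hy ω i').trans hεε.le, rfl⟩
    have hbdd : BddBelow {l : ℝ | ∃ f' : EuclideanSpace ℝ (Fin n) → ℝ,
        (∃ C : ℝ≥0, LipschitzOnWith C f' D) ∧
        (∀ i, ‖y ω i - f' (ω i)‖ ≤ ε) ∧ l = lipSemi D f'} := by
      refine ⟨0, ?_⟩
      rintro l ⟨f', ⟨C', hC'⟩, -, rfl⟩
      exact lipSemi_nonneg hC'
    have hlstar_lg : lstar ≤ lg := le_trans (csInf_le hbdd hgmem) (lipSemi_le hlg hg)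
    have hlstar0 : 0 ≤ lstar := le_csInf ⟨_, hgmem⟩ (by
      rintro l ⟨f', ⟨C', hC'⟩, -, rfl⟩
      exact lipSemi_nonneg hC')
    have ht0 : 0 ≤ t := by positivity
    have hr0 : (0:ℝ) ≤ 4 * n * t := by positivity
    have hxωi : ‖x - ω i‖ ≥ 0 := norm_nonneg _
    have hflip0 : 0 ≤ lipSemi D f := lipSemi_nonneg hC
    have hchain : ‖g x - f x‖ ≤ lg * ‖x - ω i‖ + εbar + ε + lipSemi D f * ‖x - ω i‖ := by
      have e1 : g x - f x = (g x - g (ω i)) + (g (ω i) - y ω i)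
          + (y ω i - f (ω i)) + (f (ω i) - f x) := by ring
      calc ‖g x - f x‖ = ‖(g x - g (ω i)) + (g (ω i) - y ω i)
            + (y ω i - f (ω i)) + (f (ω i) - f x)‖ := by rw [← e1]
        _ ≤ ‖(g x - g (ω i)) + (g (ω i) - y ω i) + (y ω i - f (ω i))‖
            + ‖f (ω i) - f x‖ := norm_add_le _ _
        _ ≤ ‖(g x - g (ω i)) + (g (ω i) - y ω i)‖ + ‖y ω i - f (ω i)‖
            + ‖f (ω i) - f x‖ := by gcongr; exact norm_add_le _ _
        _ ≤ ‖g x - g (ω i)‖ + ‖g (ω i) - y ω i‖ + ‖y ω i - f (ω i)‖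
            + ‖f (ω i) - f x‖ := by gcongr; exact norm_add_le _ _
        _ ≤ lg * ‖x - ω i‖ + εbar + ε + lipSemi D f * ‖x - ω i‖ := by
            have b1 := hg x hx (ω i) hωiD
            have b2 := hy ω i
            have b3 := hfy i
            have b4 : ‖f (ω i) - f x‖ ≤ lipSemi D f * ‖x - ω i‖ := by
              have := lipSemi_bound hC hωiD hx
              rwa [norm_sub_rev (ω i) x] at this
            linarith
    have hfinal : ‖g x - f x‖ ≤ (2 * lg + ρ) * (4 * n * t) + 2 * ε := by
      have hl1 : lipSemi D f * ‖x - ω i‖ ≤ (lstar + ρ) * (4 * n * t) := by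
        calc lipSemi D f * ‖x - ω i‖ ≤ (lstar + ρ) * ‖x - ω i‖ :=
              mul_le_mul_of_nonneg_right hflip hxωi
          _ ≤ (lstar + ρ) * (4 * n * t) :=
              mul_le_mul_of_nonneg_left hdist (by linarith)
      have hl2 : lg * ‖x - ω i‖ ≤ lg * (4 * n * t) :=
        mul_le_mul_of_nonneg_left hdist hlg
      have : (lstar + ρ) * (4 * n * t) ≤ (lg + ρ) * (4 * n * t) :=
        mul_le_mul_of_nonneg_right (by linarith) hr0
      calc ‖g x - f x‖ ≤ lg * ‖x - ω i‖ + εbar + ε + lipSemi D f * ‖x - ω i‖ := hchain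
        _ ≤ lg * (4*n*t) + εbar + ε + (lg + ρ) * (4*n*t) := by linarith
        _ ≤ (2 * lg + ρ) * (4 * n * t) + 2 * ε := by
            have hfact : lg * (4*(n:ℝ)*t) + (lg + ρ) * (4*(n:ℝ)*t)
                = (2*lg+ρ)*(4*(n:ℝ)*t) := by ring
            linarith
    exact hfinal
  -- Step B : the good event has large probability
  refine le_trans ?_ (measure_mono hsub)
  -- decompose the complement
  set DD : Set (Fin N → EuclideanSpace ℝ (Fin n)) := {ω | ∀ i, ω i ∈ D} with hDD
  set F : Set (Fin N → EuclideanSpace ℝ (Fin n)) :=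
    ⋃ j : Fin n → Fin m, {ω | ∀ i, ω i ∉ cell n m j} with hF
  have hcompl : Goodᶜ ⊆ DDᶜ ∪ F := by
    intro ω hω
    by_cases hP : ∀ i, ω i ∈ D
    · right
      simp only [hGood, Set.mem_compl_iff, Set.mem_setOf_eq, not_and] at hω
      have := hω hP
      push_neg at this
      obtain ⟨j, hj⟩ := this
      exact Set.mem_iUnion.2 ⟨j, hj⟩
    · exact Or.inl hP
  have hDDpi : DD = Set.pi Set.univ (fun _ : Fin N => D) := by
    ext ω; simp [hDD, Set.mem_pi]
  have hDDmeas : MeasurableSet DD := by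
    rw [hDDpi]; exact MeasurableSet.univ_pi (fun _ => hDmeas)
  have hDD1 : μN DD = 1 := by
    rw [hDDpi, hμN, Measure.pi_pi]
    simp [hμb, Measure.restrict_apply_self, hvolD]
  have hDDc : μN DDᶜ = 0 := by
    rw [measure_compl hDDmeas (by rw [hDD1]; exact ENNReal.one_ne_top), hDD1]
    simp
  -- measure of each bad cell event
  have hcellD : ∀ j : Fin n → Fin m, cell n m j ⊆ D := by
    intro j; rw [hD]; exact cell_subset_D hm j
  have hvolcell : ∀ j : Fin n → Fin m, volume (cell n m j) = ENNReal.ofReal ((1/(m:ℝ))^n) := by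
    intro j
    have : cell n m j = {x : EuclideanSpace ℝ (Fin n) |
        ∀ i, x i ∈ Set.Icc (((j i : ℕ):ℝ)/m) ((((j i : ℕ):ℝ)+1)/m)} := rfl
    rw [this, vol_pi_Icc]
    have he : ∀ i : Fin n, (((j i : ℕ):ℝ)+1)/m - ((j i : ℕ):ℝ)/m = 1/(m:ℝ) := by
      intro i; field_simp; ring
    simp_rw [he]
    rw [Finset.prod_const, ENNReal.ofReal_pow (by positivity)]
    simp
  have hμbcell : ∀ j : Fin n → Fin m,
      μb (cell n m j)ᶜ = ENNReal.ofReal (1 - (1/(m:ℝ))^n) := by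
    intro j
    have hmeasc : MeasurableSet (cell n m j) := cell_measurable j
    have hcellval : μb (cell n m j) = ENNReal.ofReal ((1/(m:ℝ))^n) := by
      rw [hμb, Measure.restrict_apply' hDmeas,
        Set.inter_eq_self_of_subset_left (hcellD j), hvolcell j]
    rw [measure_compl hmeasc (by rw [hcellval]; exact ENNReal.ofReal_ne_top)]
    rw [hcellval, measure_univ]
    rw [ENNReal.ofReal_sub _ (by positivity), ENNReal.ofReal_one]
  have hFj : ∀ j : Fin n → Fin m,
      μN {ω | ∀ i, ω i ∉ cell n m j} = ENNReal.ofReal ((1 - (1/(m:ℝ))^n)^N) := by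
    intro j
    have : {ω : Fin N → EuclideanSpace ℝ (Fin n) | ∀ i, ω i ∉ cell n m j}
        = Set.pi Set.univ (fun _ : Fin N => (cell n m j)ᶜ) := by
      ext ω; simp [Set.mem_pi]
    rw [this, hμN, Measure.pi_pi]
    simp_rw [hμbcell j]
    rw [Finset.prod_const, Finset.card_univ, Fintype.card_fin]
    have hp01 : 0 ≤ 1 - (1/(m:ℝ))^n := by
      have : (1/(m:ℝ))^n ≤ 1 := by
        apply pow_le_one₀ (by positivity)
        rw [div_le_one hmR]; exact_mod_cast hm
      linarith
    rw [← ENNReal.ofReal_pow hp01]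
  have hFbound : μN F ≤ ENNReal.ofReal δ := by
    calc μN F ≤ ∑ j : Fin n → Fin m, μN {ω | ∀ i, ω i ∉ cell n m j} :=
          measure_iUnion_fintype_le _ _
      _ = (Fintype.card (Fin n → Fin m)) • ENNReal.ofReal ((1 - (1/(m:ℝ))^n)^N) := by
          simp_rw [hFj]; rw [Finset.sum_const, Finset.card_univ]
      _ = ((m^n : ℕ) : ℝ≥0∞) * ENNReal.ofReal ((1 - (1/(m:ℝ))^n)^N) := by
          rw [nsmul_eq_mul]
          congr 1
          simp [Fintype.card_fun]
      _ = ENNReal.ofReal (((m^n : ℕ):ℝ) * (1 - (1/(m:ℝ))^n)^N) := by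
          rw [ENNReal.ofReal_mul (by positivity), ENNReal.ofReal_natCast]
      _ ≤ ENNReal.ofReal δ := ENNReal.ofReal_le_ofReal hkey
  have hGoodc : μN Goodᶜ ≤ ENNReal.ofReal δ := by
    calc μN Goodᶜ ≤ μN (DDᶜ ∪ F) := measure_mono hcompl
      _ ≤ μN DDᶜ + μN F := measure_union_le _ _
      _ ≤ 0 + ENNReal.ofReal δ := by
          rw [hDDc]; exact add_le_add le_rfl hFbound
      _ = ENNReal.ofReal δ := by rw [zero_add]
  have huniv : (1:ℝ≥0∞) ≤ μN Good + ENNReal.ofReal δ := by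
    have h1 : μN Set.univ = 1 := measure_univ
    calc (1:ℝ≥0∞) = μN (Good ∪ Goodᶜ) := by rw [Set.union_compl_self]; exact h1.symm
      _ ≤ μN Good + μN Goodᶜ := measure_union_le _ _
      _ ≤ μN Good + ENNReal.ofReal δ := add_le_add le_rfl hGoodc
  calc ENNReal.ofReal (1 - δ) = 1 - ENNReal.ofReal δ := by
        rw [ENNReal.ofReal_sub _ hδ0.le, ENNReal.ofReal_one]
    _ ≤ μN Good := tsub_le_iff_right.2 huniv
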